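/- If H is an almost malnormal subgroup of a group G₁ (i.e., H ∩ gHg⁻¹ is finite for all g ∈ G₁ \ H), then H is almost malnormal in the free product G₁ * G₂ for any group G₂. -/

import Mathlib

open Monoid

namespace Stmt3Aux

open Monoid.CoprodI

variable {ι : Type*} {G : ι → Type*} [∀ i, Group (G i)]

lemma word_prod_injective [DecidableEq ι] [∀ i, DecidableEq (G i)] :
    Function.Injective (Word.prod : Word G → CoprodI G) :=
  fun a b h => Word.equiv.symm.injective h

lemma aux_word [DecidableEq ι] [∀ i, DecidableEq (G i)] {i : ι} (w : Word G) :
    ∀ (x y : G i), x ≠ 1 → w.prod⁻¹ * of x * w.prod = of y → ∃ z : G i, w.prod = of z := by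
  induction w using Word.consRecOn with
  | empty =>
    intro x y hx h
    exact ⟨1, by simp⟩
  | cons j m w' h1 h2 ih =>
    intro x y hx h
    rw [Word.prod_cons] at h ⊢
    have key : w'.prod⁻¹ * ((of m)⁻¹ * of x * of m) * w'.prod = of y := by
      rw [← h]; group
    by_cases hji : j = i
    · subst hji
      have hx' : m⁻¹ * x * m ≠ 1 := by
        intro hc
        apply hx
        have : m * (m⁻¹ * x * m) * m⁻¹ = m * 1 * m⁻¹ := by rw [hc]
        simpa [mul_assoc] using this
      have key' : w'.prod⁻¹ * of (m⁻¹ * x * m) * w'.prod = of y := by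
        rw [map_mul, map_mul, map_inv]
        simpa [mul_assoc] using key
      obtain ⟨z, hz⟩ := ih (m⁻¹ * x * m) y hx' key'
      exact ⟨m * z, by rw [hz, map_mul]⟩
    · exfalso
      have hy : y ≠ 1 := by
        rintro rfl
        apply hx
        have : of x = (1 : CoprodI G) := by
          have := key
          rw [map_one] at this
          have h2' : of x = of m * w'.prod * 1 * w'.prod⁻¹ * (of m)⁻¹ := by
            rw [← this]; group
          simpa using h2'
        exact of_injective i (by simpa using this)
      have hm' : m⁻¹ ≠ 1 := by simpa using h2
      have hij : i ≠ j := Ne.symm hji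
      set v : NeWord G j j :=
        NeWord.append (NeWord.singleton m⁻¹ hm') hji
          (NeWord.append (NeWord.singleton x hx) hij (NeWord.singleton m h2)) with hv
      have hvp : v.prod = (of m)⁻¹ * of x * of m := by
        simp [hv, mul_assoc]
      by_cases hw' : w' = Word.empty
      · subst hw'
        have : v.prod = (NeWord.singleton y hy).prod := by
          rw [hvp, NeWord.prod_singleton, ← key]
          simp
        have hw : v.toWord = (NeWord.singleton y hy).toWord :=
          word_prod_injective this
        have := congrArg (fun w : Word G => w.toList.length) hw
        simp [NeWord.toWord, hv] at this
      · obtain ⟨l, k, s, hs⟩ := NeWord.of_word w' hw'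
        have hsp : s.prod = w'.prod := by rw [NeWord.prod, hs]
        have hlj : l ≠ j := by
          intro hc
          apply h1
          rw [← hs]
          subst hc
          simp [Word.fstIdx, NeWord.toWord]
        set W : NeWord G k k :=
          NeWord.append (NeWord.append s.inv hlj v) (Ne.symm hlj) s with hW
        have hWp : W.prod = (NeWord.singleton y hy).prod := by
          rw [NeWord.prod_singleton]
          simp only [hW, NeWord.append_prod, NeWord.inv_prod, hvp, hsp]
          rw [← key]
        have hw : W.toWord = (NeWord.singleton y hy).toWord :=
          word_prod_injective hWp
        have := congrArg (fun w : Word G => w.toList.length) hw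
        simp [NeWord.toWord, hW, hv] at this
        omega

lemma aux_conj {i : ι} (g : CoprodI G) (x y : G i) (hx : x ≠ 1)
    (h : g * of x * g⁻¹ = of y) : ∃ z : G i, g = of z := by
  classical
  obtain ⟨z, hz⟩ := aux_word (Word.equiv g⁻¹) x y hx (by
    have hp : (Word.equiv g⁻¹).prod = g⁻¹ := Word.equiv.symm_apply_apply g⁻¹
    rw [hp, inv_inv]
    exact h)
  have hp : (Word.equiv g⁻¹).prod = g⁻¹ := Word.equiv.symm_apply_apply g⁻¹
  exact ⟨z⁻¹, by rw [← inv_inv g, hp.symm.trans hz, map_inv]⟩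

end Stmt3Aux

namespace Stmt3Aux

universe u v

/-- Index family for viewing `Coprod G₁ G₂` inside `CoprodI`. -/
def Fb (G₁ : Type u) (G₂ : Type v) : Bool → Type (max u v) :=
  fun b => Bool.rec (ULift.{u} G₂) (ULift.{v} G₁) b

instance {G₁ : Type u} {G₂ : Type v} [Group G₁] [Group G₂] :
    ∀ b, Group (Fb G₁ G₂ b) := fun b =>
  match b with
  | true => inferInstanceAs (Group (ULift G₁))
  | false => inferInstanceAs (Group (ULift G₂))

variable {G₁ : Type u} {G₂ : Type v} [Group G₁] [Group G₂]

/-- The natural map `Coprod G₁ G₂ →* CoprodI (Fb G₁ G₂)`. -/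
def ψ : Coprod G₁ G₂ →* CoprodI (Fb G₁ G₂) :=
  Coprod.lift
    ((CoprodI.of (i := true)).comp (MulEquiv.ulift.symm.toMonoidHom))
    ((CoprodI.of (i := false)).comp (MulEquiv.ulift.symm.toMonoidHom))

/-- The natural map back. -/
def φ : CoprodI (Fb G₁ G₂) →* Coprod G₁ G₂ :=
  CoprodI.lift (fun b =>
    Bool.rec (motive := fun b => Fb G₁ G₂ b →* Coprod G₁ G₂)
      (Coprod.inr.comp MulEquiv.ulift.toMonoidHom)
      (Coprod.inl.comp MulEquiv.ulift.toMonoidHom) b)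

lemma ψ_inl (a : G₁) : ψ (G₂ := G₂) (Coprod.inl a) = CoprodI.of (i := true) (ULift.up a) := by
  simp [ψ, Coprod.lift_apply_inl]
  rfl

lemma φ_ψ (x : Coprod G₁ G₂) : φ (ψ x) = x := by
  have : (φ (G₁ := G₁) (G₂ := G₂)).comp ψ = MonoidHom.id _ := by
    apply Coprod.hom_ext <;> ext a <;>
      simp [ψ, φ, Coprod.lift_apply_inl, Coprod.lift_apply_inr, CoprodI.lift_of] <;> rfl
  exact DFunLike.congr_fun this x

lemma ψ_injective : Function.Injective (ψ (G₁ := G₁) (G₂ := G₂)) :=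
  Function.LeftInverse.injective φ_ψ

lemma coprod_conj {g : Coprod G₁ G₂} (hg : ∀ a : G₁, g ≠ Coprod.inl a)
    {x y : G₁} (hx : x ≠ 1) (h : g * Coprod.inl x * g⁻¹ = Coprod.inl y) : False := by
  have hψ : ψ g * CoprodI.of (i := true) (ULift.up x) * (ψ g)⁻¹
      = CoprodI.of (i := true) (ULift.up y) := by
    rw [← ψ_inl, ← ψ_inl, ← map_mul, ← map_inv, ← map_mul, h]
  have hx' : (ULift.up x : Fb G₁ G₂ true) ≠ 1 := by
    intro hc; exact hx (congrArg ULift.down hc)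
  obtain ⟨z, hz⟩ := aux_conj (ψ g) _ _ hx' hψ
  have : ψ g = ψ (Coprod.inl z.down) := by rw [ψ_inl, hz]; rfl
  exact hg z.down (ψ_injective this)

end Stmt3Aux

open Monoid

/-- If H is almost malnormal in G₁, then H is almost malnormal in the free product G₁ ∗ G₂. -/
theorem stmt_3 {G₁ G₂ : Type*} [Group G₁] [Group G₂] (H : Subgroup G₁)
    (hmal : ∀ g : G₁, g ∉ H → {h : G₁ | h ∈ H ∧ g * h * g⁻¹ ∈ H}.Finite) :
    ∀ g : Coprod G₁ G₂, g ∉ H.map (Coprod.inl : G₁ →* Coprod G₁ G₂) →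
      {h : Coprod G₁ G₂ | h ∈ H.map (Coprod.inl : G₁ →* Coprod G₁ G₂) ∧
        g * h * g⁻¹ ∈ H.map (Coprod.inl : G₁ →* Coprod G₁ G₂)}.Finite := by
  intro g hg
  by_cases hgr : ∃ a : G₁, g = Coprod.inl a
  · obtain ⟨a, rfl⟩ := hgr
    have ha : a ∉ H := fun h => hg (Subgroup.mem_map_of_mem _ h)
    refine Set.Finite.subset (((hmal a ha).image (Coprod.inl : G₁ →* Coprod G₁ G₂))) ?_
    rintro h ⟨hh, hch⟩
    obtain ⟨x, hxH, rfl⟩ := hh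
    refine ⟨x, ⟨hxH, ?_⟩, rfl⟩
    obtain ⟨y, hyH, hy⟩ := hch
    have : (Coprod.inl (a * x * a⁻¹) : Coprod G₁ G₂) = Coprod.inl y := by
      rw [hy]; simp [map_mul, map_inv, mul_assoc]
    rwa [Coprod.inl_injective this]
  · push_neg at hgr
    refine Set.Finite.subset (Set.finite_singleton 1) ?_
    rintro h ⟨hh, hch⟩
    obtain ⟨x, hxH, rfl⟩ := hh
    obtain ⟨y, hyH, hy⟩ := hch
    by_cases hx1 : x = 1
    · simp [hx1]
    · exact absurd (Stmt3Aux.coprod_conj hgr hx1 hy.symm) not_false
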